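/- Let F(z) = |z|² + Φ(z), where Φ : ℂ^{n+1} → ℝ is smooth with identically vanishing complex Hessian (Φ_{h k̄} = 0 for all h, k), and let M = {z : F(z) = 0}. Then at every point z ∈ M with ∂F(z) ≠ 0, M is Levi umbilical with Levi curvature H(z) = 1/|∂F(z)|; that is, h(X,Y) + h(JX,JY) = (2/|∂F|) ⟨X,Y⟩ for all X, Y in the horizontal space H_z. -/

import Mathlib

noncomputable section
open scoped BigOperators

/-- `ℂ^{n+1}`, identified with `ℝ^{2n+2}` via its real structure. -/
abbrev E (n : ℕ) : Type := EuclideanSpace ℂ (Fin (n + 1))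

/-- The standard complex structure: multiplication by `i`. -/
def J {n : ℕ} (v : E n) : E n := Complex.I • v

/-- The real inner product `⟨x, y⟩ = Re ⟪x, y⟫`. -/
def rI {n : ℕ} (x y : E n) : ℝ := (inner ℂ x y : ℂ).re

/-- The (real) tangent space at `p` of a hypersurface with unit normal `ν`. -/
def tangAt {n : ℕ} (ν : E n → E n) (p : E n) : Set (E n) := {X | rI (ν p) X = 0}

/-- `M` is a smooth embedded real hypersurface of `ℂ^{n+1}` (locally a regular zero
set of a smooth real function), oriented by the smooth unit normal field `ν`
(extended smoothly to the ambient space). -/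
def IsHypersurface {n : ℕ} (M : Set (E n)) (ν : E n → E n) : Prop :=
  ContDiff ℝ (⊤ : ℕ∞) ν ∧ (∀ p ∈ M, ‖ν p‖ = 1) ∧
    ∀ p ∈ M, ∃ (V : Set (E n)) (F : E n → ℝ), IsOpen V ∧ p ∈ V ∧
      ContDiffOn ℝ (⊤ : ℕ∞) F V ∧ (M ∩ V = {z ∈ V | F z = 0}) ∧
      ∀ z ∈ M ∩ V, ∀ X : E n, (fderiv ℝ F z X = 0 ↔ X ∈ tangAt ν z)

/-- The horizontal (maximal complex) subspace `H_p = {X ∈ T_pM : JX ∈ T_pM}`. -/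
def horizAt {n : ℕ} (ν : E n → E n) (p : E n) : Set (E n) :=
  {X | X ∈ tangAt ν p ∧ J X ∈ tangAt ν p}

/-- The second fundamental form `h(X,Y) = ⟨X, ∂_Y ν⟩`. -/
def sff {n : ℕ} (ν : E n → E n) (p : E n) (X Y : E n) : ℝ :=
  rI X (fderiv ℝ ν p Y)

/-- The family `X_1, …, X_n, J X_1, …, J X_n`. -/
def combined {n : ℕ} (X : Fin n → E n) : (Fin n ⊕ Fin n) → E n :=
  Sum.elim X (fun α => J (X α))

/-- `{X_1, …, X_n, J X_1, …, J X_n}` is an orthonormal basis of the horizontal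
space at `p` (w.r.t. the real inner product). -/
def IsHorizONB {n : ℕ} (ν : E n → E n) (p : E n) (X : Fin n → E n) : Prop :=
  (∀ α, X α ∈ horizAt ν p) ∧
  (∀ i j, rI (combined X i) (combined X j) = if i = j then 1 else 0) ∧
  (∀ Y ∈ horizAt ν p, Y ∈ Submodule.span ℝ (Set.range (combined X)))

/-- The `h`-th standard basis vector of `ℂ^{n+1}`. -/
def bvec {n : ℕ} (h : Fin (n + 1)) : E n := EuclideanSpace.single h 1

/-- The Wirtinger derivative `∂f/∂z_h = ½(∂f/∂x_h - i ∂f/∂y_h)`. -/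
def wz {n : ℕ} (f : E n → ℂ) (z : E n) (h : Fin (n + 1)) : ℂ :=
  (fderiv ℝ f z (bvec h) - Complex.I * fderiv ℝ f z (Complex.I • bvec h)) / 2

/-- The Wirtinger derivative `∂f/∂z̄_h = ½(∂f/∂x_h + i ∂f/∂y_h)`. -/
def wzb {n : ℕ} (f : E n → ℂ) (z : E n) (h : Fin (n + 1)) : ℂ :=
  (fderiv ℝ f z (bvec h) + Complex.I * fderiv ℝ f z (Complex.I • bvec h)) / 2

/-- `F_h = ∂F/∂z_h` for a real-valued `F`. -/
def Fz {n : ℕ} (F : E n → ℝ) (z : E n) (h : Fin (n + 1)) : ℂ :=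
  wz (fun w => (F w : ℂ)) z h

/-- `F_{h k̄} = ∂²F/∂z_h ∂z̄_k`. -/
def Fzzb {n : ℕ} (F : E n → ℝ) (z : E n) (h k : Fin (n + 1)) : ℂ :=
  wz (fun w => wzb (fun w' => (F w' : ℂ)) w k) z h

/-- `|∂F| = (Σ_h F_h F_h̄)^{1/2}`. -/
def pdF {n : ℕ} (F : E n → ℝ) (z : E n) : ℝ :=
  Real.sqrt (∑ h, Complex.normSq (Fz F z h))

/-- The unit normal `ν = ∇F/|∇F|`, whose complex coordinate vector is
`(F_h̄ / |∂F|)_h`. -/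
def nuF {n : ℕ} (F : E n → ℝ) (z : E n) : E n :=
  (WithLp.equiv 2 _).symm fun h => (starRingEnd ℂ) (Fz F z h) / (pdF F z : ℂ)

/-- The defining function `F(z) = |z|² + Φ(z)`. -/
def F17 {n : ℕ} (Φ : E n → ℝ) : E n → ℝ := fun z => ‖z‖ ^ 2 + Φ z

/-! ### Auxiliary lemmas -/

namespace Aux17

open Complex ContinuousLinearMap

variable {n : ℕ}

lemma psum_apply (f : Fin (n+1) → E n) (j : Fin (n+1)) :
    (∑ h, f h) j = ∑ h, f h j :=
  by rw [WithLp.ofLp_sum, Finset.sum_apply]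

lemma decomp (Y : E n) :
    Y = ∑ h, ((Y h).re • bvec h + (Y h).im • (Complex.I • bvec h)) := by
  ext j
  rw [psum_apply]
  simp only [PiLp.add_apply, PiLp.smul_apply, bvec, EuclideanSpace.single_apply, smul_ite,
    smul_zero, Complex.real_smul, smul_eq_mul, mul_ite, mul_zero, mul_one]
  rw [Finset.sum_add_distrib, Finset.sum_ite_eq, Finset.sum_ite_eq]
  simp [Complex.re_add_im]

lemma antiholo (L : E n →L[ℝ] ℂ)
    (hL : ∀ h, L (bvec h) = Complex.I * L (Complex.I • bvec h)) (Y : E n) :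
    L (Complex.I • Y) = -Complex.I * L Y := by
  have key : ∀ h : Fin (n+1),
      L (Complex.I • ((Y h).re • bvec h + (Y h).im • (Complex.I • bvec h)))
        = -Complex.I * L ((Y h).re • bvec h + (Y h).im • (Complex.I • bvec h)) := by
    intro h
    have hIIb : Complex.I • Complex.I • bvec h = -(bvec h) := by
      rw [smul_smul, Complex.I_mul_I, neg_one_smul]
    have e1 : Complex.I • ((Y h).re • bvec h + (Y h).im • (Complex.I • bvec h))
        = (Y h).re • (Complex.I • bvec h) + (-(Y h).im) • (bvec h) := by
      rw [smul_add, smul_comm, smul_comm Complex.I, hIIb, smul_neg, ← neg_smul]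
    rw [e1, map_add, L.map_smul, L.map_smul, map_add, L.map_smul, L.map_smul, hL h]
    push_cast [Complex.real_smul]
    linear_combination (↑(Y h).re * L (Complex.I • bvec h)) * Complex.I_sq
  calc L (Complex.I • Y)
      = L (Complex.I • ∑ h, ((Y h).re • bvec h + (Y h).im • (Complex.I • bvec h))) := by
        rw [← decomp Y]
    _ = ∑ h, L (Complex.I • ((Y h).re • bvec h + (Y h).im • (Complex.I • bvec h))) := by
        rw [Finset.smul_sum, map_sum]
    _ = ∑ h, -Complex.I * L ((Y h).re • bvec h + (Y h).im • (Complex.I • bvec h)) :=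
        Finset.sum_congr rfl fun h _ => key h
    _ = -Complex.I * L Y := by
        rw [← Finset.mul_sum, ← map_sum, ← decomp Y]

lemma rinner_bvec (w : E n) (h : Fin (n+1)) : (inner ℝ w (bvec h) : ℝ) = (w h).re := by
  simp [bvec, PiLp.inner_apply, EuclideanSpace.single_apply, apply_ite Complex.re,
    Finset.sum_ite_eq']

lemma rinner_Ibvec (w : E n) (h : Fin (n+1)) :
    (inner ℝ w (Complex.I • bvec h) : ℝ) = (w h).im := by
  simp [bvec, PiLp.inner_apply, EuclideanSpace.single_apply, PiLp.smul_apply, mul_ite,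
    apply_ite Complex.re, Finset.sum_ite_eq']

lemma rI_eq (x v : E n) : rI x v = (∑ h, (starRingEnd ℂ) (x h) * v h).re := by
  simp [rI, PiLp.inner_apply, RCLike.inner_apply]
  exact Finset.sum_congr rfl fun _ _ => by ring

lemma rI_add_right (x a b : E n) : rI x (a + b) = rI x a + rI x b := by
  simp [rI, inner_add_right]

lemma rI_smul_right (x v : E n) (t : ℝ) : rI x (t • v) = t * rI x v := by
  rw [rI_eq, rI_eq]
  have : ∑ h, (starRingEnd ℂ) (x h) * ((t • v) h)
      = (t : ℂ) * ∑ h, (starRingEnd ℂ) (x h) * v h := by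
    rw [Finset.mul_sum]
    refine Finset.sum_congr rfl fun h _ => ?_
    simp only [PiLp.smul_apply, Complex.real_smul]
    ring
  rw [this, Complex.re_ofReal_mul]

lemma rI_comm (x y : E n) : rI x y = rI y x := by
  unfold rI
  rw [← inner_conj_symm x y, Complex.conj_re]

variable (Φ : E n → ℝ)

/-- The Wirtinger antiholomorphic derivative of `Φ`, as function of the point. -/
def ψ (k : Fin (n+1)) : E n → ℂ := fun w => wzb (fun w' => (Φ w' : ℂ)) w k

variable {Φ} (hΦ : ContDiff ℝ (⊤ : ℕ∞) Φ)

section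
include hΦ

lemma hΦc : ContDiff ℝ (⊤ : ℕ∞) (fun w : E n => (Φ w : ℂ)) :=
  Complex.ofRealCLM.contDiff.comp hΦ

lemma hasΦc (w : E n) :
    HasFDerivAt (fun w : E n => (Φ w : ℂ))
      (Complex.ofRealCLM.comp (fderiv ℝ Φ w)) w :=
  Complex.ofRealCLM.hasFDerivAt.comp w (hΦ.differentiable (by simp) w).hasFDerivAt

lemma fderivΦc (w : E n) :
    fderiv ℝ (fun w : E n => (Φ w : ℂ)) w = Complex.ofRealCLM.comp (fderiv ℝ Φ w) :=
  (hasΦc hΦ w).fderiv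

lemma FzΦ_eq (w : E n) (h : Fin (n+1)) :
    Fz Φ w h = (((fderiv ℝ Φ w (bvec h) : ℝ) : ℂ)
      - Complex.I * ((fderiv ℝ Φ w (Complex.I • bvec h) : ℝ) : ℂ)) / 2 := by
  unfold Fz wz
  rw [fderivΦc hΦ]
  simp

lemma ψ_eq (w : E n) (k : Fin (n+1)) :
    ψ Φ k w = (((fderiv ℝ Φ w (bvec k) : ℝ) : ℂ)
      + Complex.I * ((fderiv ℝ Φ w (Complex.I • bvec k) : ℝ) : ℂ)) / 2 := by
  unfold ψ wzb
  rw [fderivΦc hΦ]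
  simp

lemma conj_FzΦ (w : E n) (h : Fin (n+1)) :
    (starRingEnd ℂ) (Fz Φ w h) = ψ Φ h w := by
  rw [FzΦ_eq hΦ, ψ_eq hΦ]
  simp [map_div₀, map_ofNat]

/-- second-derivative data -/
lemma hD1 : ContDiff ℝ (⊤ : ℕ∞) (fderiv ℝ (fun w : E n => (Φ w : ℂ))) :=
  (hΦc hΦ).fderiv_right (by exact_mod_cast le_top)

end

variable (Φ)

/-- The second derivative of `Φc` at `z`. -/
def f₂ (z : E n) : E n →L[ℝ] E n →L[ℝ] ℂ :=
  fderiv ℝ (fderiv ℝ (fun w : E n => (Φ w : ℂ))) z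

/-- The derivative of `ψ k` at `z`. -/
def Lψ (z : E n) (k : Fin (n+1)) : E n →L[ℝ] ℂ :=
  (2 : ℂ)⁻¹ • ((ContinuousLinearMap.apply ℝ ℂ (bvec k)).comp (f₂ Φ z)
    + Complex.I • (ContinuousLinearMap.apply ℝ ℂ (Complex.I • bvec k)).comp (f₂ Φ z))

variable {Φ}

lemma Lψ_apply (z : E n) (k : Fin (n+1)) (Y : E n) :
    Lψ Φ z k Y = (f₂ Φ z Y (bvec k) + Complex.I * f₂ Φ z Y (Complex.I • bvec k)) / 2 := by
  simp [Lψ, div_eq_inv_mul, smul_eq_mul, mul_add]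

section
include hΦ

lemma hasf₂ (z : E n) :
    HasFDerivAt (fderiv ℝ (fun w : E n => (Φ w : ℂ))) (f₂ Φ z) z :=
  (((hD1 hΦ).differentiable (by simp)) z).hasFDerivAt

lemma hasψ (z : E n) (k : Fin (n+1)) : HasFDerivAt (ψ Φ k) (Lψ Φ z k) z := by
  have hA : HasFDerivAt (fun w : E n => fderiv ℝ (fun w : E n => (Φ w : ℂ)) w (bvec k))
      ((ContinuousLinearMap.apply ℝ ℂ (bvec k)).comp (f₂ Φ z)) z :=
    (ContinuousLinearMap.apply ℝ ℂ (bvec k)).hasFDerivAt.comp z (hasf₂ hΦ z)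
  have hB : HasFDerivAt
      (fun w : E n => fderiv ℝ (fun w : E n => (Φ w : ℂ)) w (Complex.I • bvec k))
      ((ContinuousLinearMap.apply ℝ ℂ (Complex.I • bvec k)).comp (f₂ Φ z)) z :=
    (ContinuousLinearMap.apply ℝ ℂ (Complex.I • bvec k)).hasFDerivAt.comp z (hasf₂ hΦ z)
  have h2 := (hA.add (hB.const_mul Complex.I)).const_mul (2 : ℂ)⁻¹
  have : ψ Φ k = fun w => (2:ℂ)⁻¹ *
      (fderiv ℝ (fun w : E n => (Φ w : ℂ)) w (bvec k)
        + Complex.I * fderiv ℝ (fun w : E n => (Φ w : ℂ)) w (Complex.I • bvec k)) := by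
    funext w
    simp [ψ, wzb, div_eq_inv_mul]
  rw [this]
  exact h2

lemma LψI (hpoly : ∀ (z : E n) (h k : Fin (n + 1)), Fzzb Φ z h k = 0)
    (z : E n) (k : Fin (n+1)) (Y : E n) :
    Lψ Φ z k (Complex.I • Y) = -Complex.I * Lψ Φ z k Y := by
  refine antiholo _ (fun h => ?_) Y
  have h0 : wz (ψ Φ k) z h = 0 := hpoly z h k
  unfold wz at h0
  rw [(hasψ hΦ z k).fderiv] at h0
  have h1 : Lψ Φ z k (bvec h) - Complex.I * Lψ Φ z k (Complex.I • bvec h) = 0 := by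
    field_simp at h0
    simpa using h0
  linear_combination h1

end

section
include hΦ

lemma hasF17c (w : E n) :
    HasFDerivAt (fun x : E n => ((F17 Φ x : ℝ) : ℂ))
      (Complex.ofRealCLM.comp ((2 • (innerSL ℝ w)) + fderiv ℝ Φ w)) w := by
  have h1 : HasFDerivAt (F17 Φ) ((2 • (innerSL ℝ w)) + fderiv ℝ Φ w) w :=
    (hasStrictFDerivAt_norm_sq w).hasFDerivAt.add
      (hΦ.differentiable (by simp) w).hasFDerivAt
  exact Complex.ofRealCLM.hasFDerivAt.comp w h1

lemma keyFz (w : E n) (h : Fin (n+1)) :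
    Fz (F17 Φ) w h = (starRingEnd ℂ) (w h) + Fz Φ w h := by
  have hc : (starRingEnd ℂ) (w h) = ((w h).re : ℂ) - (w h).im * Complex.I := by
    simp [Complex.ext_iff]
  unfold Fz wz
  rw [(hasF17c hΦ w).fderiv, fderivΦc hΦ, hc]
  simp only [ContinuousLinearMap.comp_apply, ContinuousLinearMap.add_apply,
    ContinuousLinearMap.smul_apply, innerSL_apply_apply, Complex.ofRealCLM_apply,
    rinner_bvec, rinner_Ibvec, smul_eq_mul, nsmul_eq_mul, Nat.cast_ofNat]
  push_cast
  ring

lemma conj_keyFz (w : E n) (h : Fin (n+1)) :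
    (starRingEnd ℂ) (Fz (F17 Φ) w h) = w h + ψ Φ h w := by
  rw [keyFz hΦ, map_add, conj_FzΦ hΦ]
  simp

end

end Aux17

open Aux17

theorem stmt17 {n : ℕ} (Φ : E n → ℝ) (hΦ : ContDiff ℝ (⊤ : ℕ∞) Φ)
    (hpoly : ∀ (z : E n) (h k : Fin (n + 1)), Fzzb Φ z h k = 0)
    (z : E n) (hz : F17 Φ z = 0) (hreg : pdF (F17 Φ) z ≠ 0) :
    ∀ X ∈ horizAt (nuF (F17 Φ)) z, ∀ Y ∈ horizAt (nuF (F17 Φ)) z,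
      sff (nuF (F17 Φ)) z X Y + sff (nuF (F17 Φ)) z (J X) (J Y)
        = (2 / pdF (F17 Φ) z) * rI X Y := by
  intro X hX Y hY
  classical
  set p : E n → ℝ := fun w => pdF (F17 Φ) w with hp
  set G : E n → E n := fun w => (WithLp.equiv 2 _).symm (fun h => w h + Aux17.ψ Φ h w) with hGdef
  have hνeq : nuF (F17 Φ) = fun w => (p w)⁻¹ • G w := by
    funext w
    ext h
    show (starRingEnd ℂ) (Fz (F17 Φ) w h) / (pdF (F17 Φ) w : ℂ)
      = ((p w)⁻¹ • G w) h
    rw [conj_keyFz hΦ]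
    have : ((p w)⁻¹ • G w) h = (p w)⁻¹ • (w h + Aux17.ψ Φ h w) := rfl
    rw [this, Complex.real_smul, Complex.ofReal_inv, div_eq_inv_mul]
  set LG : E n →L[ℝ] E n :=
    (((PiLp.continuousLinearEquiv 2 ℝ (fun _ : Fin (n+1) => ℂ)).symm :
        (Fin (n+1) → ℂ) ≃L[ℝ] E n) : (Fin (n+1) → ℂ) →L[ℝ] E n).comp
      (ContinuousLinearMap.pi
        (fun h => ((EuclideanSpace.proj h : E n →L[ℂ] ℂ).restrictScalars ℝ)
          + Aux17.Lψ Φ z h)) with hLGdef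
  have hLG_apply : ∀ (W : E n) (h : Fin (n+1)), LG W h = W h + Lψ Φ z h W := by
    intro W h
    rfl
  have hG : HasFDerivAt G LG z := by
    have hpi : HasFDerivAt (fun w : E n => (fun h => w h + Aux17.ψ Φ h w))
        (ContinuousLinearMap.pi
          (fun h => ((EuclideanSpace.proj h : E n →L[ℂ] ℂ).restrictScalars ℝ)
            + Aux17.Lψ Φ z h)) z := by
      refine hasFDerivAt_pi.2 (fun h => ?_)
      have h1 : HasFDerivAt (fun w : E n => w h)
          ((EuclideanSpace.proj h : E n →L[ℂ] ℂ).restrictScalars ℝ) z :=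
        ((EuclideanSpace.proj h : E n →L[ℂ] ℂ).restrictScalars ℝ).hasFDerivAt
      exact h1.add (hasψ hΦ z h)
    exact ((((PiLp.continuousLinearEquiv 2 ℝ (fun _ : Fin (n+1) => ℂ)).symm) :
      (Fin (n+1) → ℂ) →L[ℝ] E n)).hasFDerivAt.comp z hpi
  have hpdef : p = fun w => Real.sqrt (∑ h, Complex.normSq ((w h) + Aux17.ψ Φ h w)) := by
    funext w
    show pdF (F17 Φ) w = _
    unfold pdF
    congr 1
    refine Finset.sum_congr rfl fun h _ => ?_
    rw [← Complex.normSq_conj, conj_keyFz hΦ]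
  have hnormsq : ∀ (c : ℂ), Complex.normSq c = ‖c‖ ^ 2 := by
    intro c
    rw [Complex.sq_norm]
  have hgh : ∀ h : Fin (n+1), HasFDerivAt (fun w : E n => w h + Aux17.ψ Φ h w)
      (((EuclideanSpace.proj h : E n →L[ℂ] ℂ).restrictScalars ℝ) + Aux17.Lψ Φ z h) z :=
    fun h => (((EuclideanSpace.proj h : E n →L[ℂ] ℂ).restrictScalars ℝ).hasFDerivAt).add
      (hasψ hΦ z h)
  have hS : DifferentiableAt ℝ
      (fun w : E n => ∑ h, Complex.normSq ((w h) + Aux17.ψ Φ h w)) z := by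
    refine DifferentiableAt.fun_sum fun h _ => ?_
    have : (fun w : E n => Complex.normSq ((w h) + Aux17.ψ Φ h w))
        = fun w => ‖(w h) + Aux17.ψ Φ h w‖ ^ 2 := funext fun w => hnormsq _
    rw [this]
    exact ((hgh h).norm_sq).differentiableAt
  have hSz : (∑ h, Complex.normSq (z h + Aux17.ψ Φ h z)) ≠ 0 := by
    intro h0
    apply hreg
    have h1 : p z = Real.sqrt (∑ h, Complex.normSq (z h + Aux17.ψ Φ h z)) :=
      congrFun hpdef z
    have : p z = 0 := by rw [h1, h0, Real.sqrt_zero]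
    exact this
  have hpz : p z ≠ 0 := hreg
  have hpdiff : DifferentiableAt ℝ p z := by
    rw [hpdef]
    exact ((Real.hasDerivAt_sqrt hSz).comp_hasFDerivAt z hS.hasFDerivAt).differentiableAt
  have hr : DifferentiableAt ℝ (fun w => (p w)⁻¹) z := hpdiff.inv hpz
  set R := fderiv ℝ (fun w => (p w)⁻¹) z with hR
  have hν : HasFDerivAt (nuF (F17 Φ)) ((p z)⁻¹ • LG + R.smulRight (G z)) z := by
    rw [hνeq]
    exact hr.hasFDerivAt.smul hG
  have hfder : fderiv ℝ (nuF (F17 Φ)) z = (p z)⁻¹ • LG + R.smulRight (G z) := hν.fderiv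
  have hGz : G z = p z • nuF (F17 Φ) z := by
    ext h
    show z h + ψ Φ h z
      = p z • ((starRingEnd ℂ) (Fz (F17 Φ) z h) / (pdF (F17 Φ) z : ℂ))
    rw [conj_keyFz hΦ]
    have hpz' : (pdF (F17 Φ) z : ℂ) ≠ 0 := by exact_mod_cast hreg
    rw [Complex.real_smul]
    show _ = (p z : ℂ) * ((z h + ψ Φ h z) / (p z : ℂ))
    field_simp
    exact (mul_div_cancel_right₀ _ hpz').symm
  have hXG : rI X (G z) = 0 := by
    rw [hGz, rI_smul_right, rI_comm, hX.1, mul_zero]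
  have hJXG : rI (J X) (G z) = 0 := by
    rw [hGz, rI_smul_right, rI_comm, hX.2, mul_zero]
  have happ : ∀ W : E n, (((p z)⁻¹ • LG + R.smulRight (G z)) : E n →L[ℝ] E n) W
      = (p z)⁻¹ • LG W + R W • G z := by
    intro W
    simp
  have hsum : rI X (LG Y) + rI (J X) (LG (J Y)) = 2 * rI X Y := by
    rw [rI_eq, rI_eq, rI_eq, ← Complex.add_re, ← Finset.sum_add_distrib]
    have hterm : ∀ h : Fin (n+1),
        (starRingEnd ℂ) (X h) * (LG Y h) + (starRingEnd ℂ) ((J X) h) * (LG (J Y) h)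
          = 2 * ((starRingEnd ℂ) (X h) * Y h) := by
      intro h
      rw [hLG_apply, hLG_apply]
      have hJYh : (J Y) h = Complex.I * Y h := rfl
      have hJXh : (J X) h = Complex.I * X h := rfl
      have hLψJ : Lψ Φ z h (J Y) = -Complex.I * Lψ Φ z h Y := LψI hΦ hpoly z h Y
      rw [hJYh, hJXh, hLψJ]
      simp only [map_mul, Complex.conj_I]
      linear_combination ((starRingEnd ℂ) (X h) * Lψ Φ z h Y
        - (starRingEnd ℂ) (X h) * Y h) * Complex.I_sq
    rw [Finset.sum_congr rfl (fun h _ => hterm h), ← Finset.mul_sum]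
    simp [Complex.mul_re]
  show rI X (fderiv ℝ (nuF (F17 Φ)) z Y) + rI (J X) (fderiv ℝ (nuF (F17 Φ)) z (J Y))
      = (2 / pdF (F17 Φ) z) * rI X Y
  rw [hfder]
  rw [happ, happ, rI_add_right, rI_add_right, rI_smul_right, rI_smul_right,
    rI_smul_right, rI_smul_right, hXG, hJXG]
  have hfinal : (p z)⁻¹ * rI X (LG Y) + (p z)⁻¹ * rI (J X) (LG (J Y))
      = 2 / p z * rI X Y := by
    rw [← mul_add, hsum]
    field_simp
  show (p z)⁻¹ * rI X (LG Y) + R Y * 0 + ((p z)⁻¹ * rI (J X) (LG (J Y)) + R (J Y) * 0)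
      = 2 / p z * rI X Y
  rw [mul_zero, mul_zero, add_zero, add_zero]
  exact hfinal
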